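/- Let q ≥ 3 be an integer and θ = 1 − 1/q. There exists δ_E ∈ ( (2q−3)/(q(q−1)), (3/4)·(q − 4/3)/(q−1) ) such that the Elias bound α_E(x) = 1 − H_q(θ(1 − √(1 − x/θ))) is convex on [0, δ_E] and concave on [δ_E, θ]; moreover α_E″(x) > 0 for x ∈ (0, δ_E) and α_E″(x) < 0 for x ∈ (δ_E, θ). -/

import Mathlib

open Filter Real Set

set_option maxHeartbeats 1000000

/-- The q-ary entropy function. -/
noncomputable def qEntropy (q : ℕ) (x : ℝ) : ℝ :=
  x * Real.logb q (((q : ℝ) - 1) / x) + (1 - x) * Real.logb q (1 / (1 - x))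

/-- The Elias bound `α_E` (with `θ = 1 - 1/q`). -/
noncomputable def alphaE (q : ℕ) (x : ℝ) : ℝ :=
  1 - qEntropy q ((1 - 1 / (q : ℝ)) * (1 - Real.sqrt (1 - x / (1 - 1 / (q : ℝ)))))

lemma qEntropy_eq (q : ℕ) (hq : 3 ≤ q) (z : ℝ) :
    qEntropy q z = Real.qaryEntropy q z / Real.log q := by
  have hq1 : (1:ℝ) ≤ (q:ℝ) - 1 := by
    have : (3:ℝ) ≤ q := by exact_mod_cast hq
    linarith
  have hqne : (q:ℝ) - 1 ≠ 0 := by linarith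
  rcases eq_or_ne z 0 with rfl | hz0
  · simp [qEntropy, Real.qaryEntropy, Real.binEntropy]
  rcases eq_or_ne z 1 with rfl | hz1
  · simp [qEntropy, Real.qaryEntropy, Real.binEntropy, Real.logb, div_one]
  have h1z : 1 - z ≠ 0 := sub_ne_zero.mpr (Ne.symm hz1)
  unfold qEntropy Real.qaryEntropy Real.binEntropy
  rw [Real.logb, Real.logb, Real.log_div hqne hz0]
  simp only [one_div, Real.log_inv]
  push_cast
  field_simp
  ring

/-- The sign-determining function for the second derivative of the Elias bound. -/
noncomputable def EF (r s : ℝ) : ℝ :=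
  r * s / ((1 - s) * (1 + (r - 1) * s)) - Real.log ((1 + (r - 1) * s) / (1 - s))

section EFlemmas
variable {r : ℝ} (hr : 3 ≤ r)
include hr

omit hr in
lemma EF_zero : EF r 0 = 0 := by simp [EF]

lemma hasDerivAt_EF {s : ℝ} (h0 : 0 ≤ s) (h1 : s < 1) :
    HasDerivAt (EF r)
      (r * s * (2 * (r - 1) * s - (r - 2)) / ((1 - s) * (1 + (r - 1) * s))^2) s := by
  have hs1 : (0:ℝ) < 1 - s := by linarith
  have hN : (0:ℝ) < 1 + (r - 1) * s := by nlinarith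
  have hD : ((1 - s) * (1 + (r - 1) * s)) ≠ 0 := by positivity
  have hrat : HasDerivAt (fun t => r * t / ((1 - t) * (1 + (r - 1) * t)))
      ((r * ((1 - s) * (1 + (r - 1) * s)) - r * s * ((r-2) - 2*(r-1)*s)) /
        ((1 - s) * (1 + (r - 1) * s))^2) s := by
    have hnum : HasDerivAt (fun t : ℝ => r * t) r s := by
      simpa using (hasDerivAt_id s).const_mul r
    have hden : HasDerivAt (fun t : ℝ => (1 - t) * (1 + (r - 1) * t))
        ((r-2) - 2*(r-1)*s) s := by
      have h1' : HasDerivAt (fun t : ℝ => 1 - t) (-1) s := by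
        simpa using (hasDerivAt_id s).const_sub 1
      have h2' : HasDerivAt (fun t : ℝ => 1 + (r - 1) * t) (r - 1) s := by
        simpa using ((hasDerivAt_id s).const_mul (r-1)).const_add 1
      have := h1'.mul h2'
      refine this.congr_deriv ?_; ring
    exact hnum.div hden hD
  have hlog : HasDerivAt (fun t => Real.log ((1 + (r - 1) * t) / (1 - t)))
      (r / ((1 - s) * (1 + (r - 1) * s))) s := by
    have hev : (fun t => Real.log ((1 + (r - 1) * t) / (1 - t)))
        =ᶠ[nhds s] (fun t => Real.log (1 + (r - 1) * t) - Real.log (1 - t)) := by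
      have hrpos : (0:ℝ) < r - 1 := by linarith
      have hlo : (-(1/(r-1)) : ℝ) < s := by
        have : (0:ℝ) < 1/(r-1) := by positivity
        linarith
      have hmem : Set.Ioo (-(1/(r-1)) : ℝ) 1 ∈ nhds s := Ioo_mem_nhds hlo h1
      filter_upwards [hmem] with t ht
      have h1t : (0:ℝ) < 1 - t := by linarith [ht.2]
      have hNt : (0:ℝ) < 1 + (r - 1) * t := by
        have h2 : (r-1) * (-(1/(r-1))) < (r-1) * t := mul_lt_mul_of_pos_left ht.1 hrpos
        have h3 : (r-1) * (-(1/(r-1))) = -1 := by field_simp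
        linarith
      rw [Real.log_div (ne_of_gt hNt) (ne_of_gt h1t)]
    have hA : HasDerivAt (fun t : ℝ => Real.log (1 + (r - 1) * t))
        ((r - 1) / (1 + (r - 1) * s)) s := by
      have h2' : HasDerivAt (fun t : ℝ => 1 + (r - 1) * t) (r - 1) s := by
        simpa using ((hasDerivAt_id s).const_mul (r-1)).const_add 1
      simpa [div_eq_mul_inv, mul_comm] using (h2'.log (ne_of_gt hN))
    have hB : HasDerivAt (fun t : ℝ => Real.log (1 - t)) (-(1 / (1 - s))) s := by
      have h1' : HasDerivAt (fun t : ℝ => 1 - t) (-1) s := by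
        simpa using (hasDerivAt_id s).const_sub 1
      simpa [div_eq_mul_inv] using (h1'.log (ne_of_gt hs1))
    have := (hA.sub hB).congr_of_eventuallyEq hev
    refine this.congr_deriv ?_
    field_simp
    ring
  have := hrat.sub hlog
  refine this.congr_deriv ?_
  have hD2 : ((1 - s) * (1 + (r - 1) * s))^2 ≠ 0 := pow_ne_zero 2 hD
  field_simp
  ring



lemma EF_contOn {a b : ℝ} (ha : 0 ≤ a) (hb : b < 1) : ContinuousOn (EF r) (Icc a b) :=
  fun s hs => ((hasDerivAt_EF hr (ha.trans hs.1) (lt_of_le_of_lt hs.2 hb)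
    ).differentiableAt.continuousAt).continuousWithinAt

lemma s0_pos : (0:ℝ) < (r-2)/(2*(r-1)) := by
  apply div_pos <;> linarith

lemma s0_lt_s1 : (r-2)/(2*(r-1)) < (r-2)/(r-1) := by
  rw [div_lt_div_iff₀ (by linarith) (by linarith)]
  nlinarith

lemma s1_lt_one : (r-2)/(r-1) < 1 := by
  rw [div_lt_one (by linarith)]; linarith

lemma EF_strictAntiOn : StrictAntiOn (EF r) (Icc 0 ((r-2)/(2*(r-1)))) := by
  have hs0 : (r-2)/(2*(r-1)) < 1 := (s0_lt_s1 hr).trans (s1_lt_one hr)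
  apply strictAntiOn_of_deriv_neg (convex_Icc _ _) (EF_contOn hr le_rfl hs0)
  intro s hs
  rw [interior_Icc] at hs
  rw [(hasDerivAt_EF hr hs.1.le (hs.2.trans hs0)).deriv]
  apply div_neg_of_neg_of_pos
  · have h1 : 0 < r * s := by nlinarith [hs.1]
    have h2 : 2 * (r - 1) * s - (r - 2) < 0 := by
      have hlt : s < (r-2)/(2*(r-1)) := hs.2
      rw [lt_div_iff₀ (by linarith : (0:ℝ) < 2*(r-1))] at hlt
      nlinarith
    nlinarith
  · have hs1 : s < 1 := hs.2.trans hs0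
    have hpos : (0:ℝ) < (1 - s) * (1 + (r - 1) * s) :=
      mul_pos (by linarith) (by nlinarith [hs.1])
    exact pow_pos hpos 2

lemma EF_strictMonoOn : StrictMonoOn (EF r) (Ico ((r-2)/(2*(r-1))) 1) := by
  apply strictMonoOn_of_deriv_pos (convex_Ico _ _)
  · intro s hs
    exact ((hasDerivAt_EF hr ((s0_pos hr).le.trans hs.1) hs.2
      ).differentiableAt.continuousAt).continuousWithinAt
  intro s hs
  rw [interior_Ico] at hs
  have hs0 : 0 < s := (s0_pos hr).trans hs.1
  rw [(hasDerivAt_EF hr hs0.le hs.2).deriv]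
  apply div_pos
  · have h2 : 0 < 2 * (r - 1) * s - (r - 2) := by
      have hlt : (r-2)/(2*(r-1)) < s := hs.1
      rw [div_lt_iff₀ (by linarith : (0:ℝ) < 2*(r-1))] at hlt
      nlinarith
    nlinarith
  · have hpos : (0:ℝ) < (1 - s) * (1 + (r - 1) * s) :=
      mul_pos (by linarith [hs.2]) (by nlinarith [hs0])
    exact pow_pos hpos 2

lemma EF_s0_neg : EF r ((r-2)/(2*(r-1))) < 0 := by
  have := EF_strictAntiOn hr (left_mem_Icc.mpr (s0_pos hr).le)
    (right_mem_Icc.mpr (s0_pos hr).le) (s0_pos hr)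
  rw [EF_zero] at this
  exact this

omit hr in
lemma two_log_lt (t : ℝ) (ht : 2 ≤ t) : 2 * Real.log t < t - 1/t := by
  set g : ℝ → ℝ := fun t => t - 1/t - 2 * Real.log t with hg
  have key : StrictMonoOn g (Ici 1) := by
    apply strictMonoOn_of_deriv_pos (convex_Ici _)
    · apply ContinuousOn.sub (ContinuousOn.sub continuousOn_id ?_) ?_
      · exact continuousOn_const.div continuousOn_id (fun x hx => by
          simp only [mem_Ici] at hx; intro h; simp [h] at hx; linarith)
      · exact (continuousOn_const.mul (Real.continuousOn_log.mono (fun x hx => by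
          simp only [mem_Ici] at hx; simp; linarith)))
    intro x hx
    rw [interior_Ici] at hx
    have hx0 : (0:ℝ) < x := by linarith [mem_Ioi.mp hx]
    have hd : HasDerivAt g (1 - (-(1/x^2)) - 2 * (1/x)) x := by
      have h1 : HasDerivAt (fun t : ℝ => 1/t) (-(1/x^2)) x := by
        simpa [one_div] using hasDerivAt_inv (ne_of_gt hx0)
      have h2 : HasDerivAt (fun t : ℝ => 2 * Real.log t) (2 * (1/x)) x := by
        simpa [one_div] using (Real.hasDerivAt_log (ne_of_gt hx0)).const_mul 2
      exact ((hasDerivAt_id x).sub h1).sub h2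
    rw [hd.deriv]
    have hx1 : 1 < x := mem_Ioi.mp hx
    have heq : 1 - (-(1/x^2)) - 2*(1/x) = (x-1)^2/x^2 := by field_simp; ring
    rw [heq]
    exact div_pos (pow_pos (by linarith) 2) (pow_pos hx0 2)
  have h1 : g 1 < g t := key (self_mem_Ici) (mem_Ici.mpr (by linarith)) (by linarith)
  have : g 1 = 0 := by simp [hg]
  rw [this] at h1
  simp only [hg] at h1
  linarith

lemma EF_s1_pos : 0 < EF r ((r-2)/(r-1)) := by
  have hr1 : (0:ℝ) < r - 1 := by linarith
  have h1 : 1 - (r-2)/(r-1) = 1/(r-1) := by field_simp; ring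
  have h2 : 1 + (r - 1) * ((r-2)/(r-1)) = r - 1 := by field_simp; ring
  unfold EF
  rw [h1, h2]
  have h3 : (r - 1) / (1/(r-1)) = (r-1)^2 := by field_simp
  have h4 : (1/(r-1)) * (r-1) = 1 := by field_simp
  rw [h3, h4, div_one, Real.log_pow]
  have h5 : r * ((r-2)/(r-1)) = (r*(r-2))/(r-1) := by ring
  have h6 := two_log_lt (r-1) (by linarith)
  have h7 : (r-1) - 1/(r-1) = (r*(r-2))/(r-1) := by field_simp; ring
  push_cast
  rw [h5, ← h7]
  linarith


lemma EF_root : ∃ sc ∈ Ioo ((r-2)/(2*(r-1))) ((r-2)/(r-1)), EF r sc = 0 ∧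
    (∀ s ∈ Ioo 0 sc, EF r s < 0) ∧ (∀ s ∈ Ioo sc 1, 0 < EF r s) := by
  have himg := intermediate_value_Ioo (le_of_lt (s0_lt_s1 hr))
      (EF_contOn hr (s0_pos hr).le (s1_lt_one hr))
  obtain ⟨sc, hscmem, hval⟩ := himg ⟨EF_s0_neg hr, EF_s1_pos hr⟩
  have hsc1 : sc < 1 := hscmem.2.trans (s1_lt_one hr)
  have hsc0 : 0 < sc := (s0_pos hr).trans hscmem.1
  refine ⟨sc, hscmem, hval, ?_, ?_⟩
  · intro s hs
    rcases le_or_gt s ((r-2)/(2*(r-1))) with h | h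
    · have := EF_strictAntiOn hr (left_mem_Icc.mpr (s0_pos hr).le) ⟨hs.1.le, h⟩ hs.1
      rwa [EF_zero] at this
    · have := EF_strictMonoOn hr ⟨h.le, hs.2.trans hsc1⟩ ⟨hscmem.1.le, hsc1⟩ hs.2
      rwa [hval] at this
  · intro s hs
    have := EF_strictMonoOn hr ⟨hscmem.1.le, hsc1⟩ ⟨(hscmem.1.trans hs.1).le, hs.2⟩ hs.1
    rwa [hval] at this

end EFlemmas

noncomputable def SS (q : ℕ) (x : ℝ) : ℝ := Real.sqrt (1 - x / (1 - 1/(q:ℝ)))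
noncomputable def YY (q : ℕ) (x : ℝ) : ℝ := (1 - 1/(q:ℝ)) * (1 - SS q x)
noncomputable def LL (q : ℕ) (x : ℝ) : ℝ :=
  Real.log ((q:ℝ) - 1) + Real.log (1 - YY q x) - Real.log (YY q x)
noncomputable def D1 (q : ℕ) (x : ℝ) : ℝ := -(LL q x / (2 * SS q x)) / Real.log q
noncomputable def D2 (q : ℕ) (x : ℝ) : ℝ :=
  (1 / (4 * (SS q x)^2 * (YY q x * (1 - YY q x)))
    - LL q x / (4 * (1 - 1/(q:ℝ)) * (SS q x)^3)) / Real.log q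

section Calc
variable {q : ℕ} (hq : 3 ≤ q)
include hq

lemma hr3 : (3:ℝ) ≤ (q:ℝ) := by exact_mod_cast hq

lemma theta_pos : (0:ℝ) < 1 - 1/(q:ℝ) := by
  have h := hr3 hq
  have : (0:ℝ) < (q:ℝ) := by linarith
  have : 1/(q:ℝ) ≤ 1/3 := by
    apply one_div_le_one_div_of_le <;> linarith
  linarith

lemma theta_lt_one : (1:ℝ) - 1/(q:ℝ) < 1 := by
  have h := hr3 hq
  have : (0:ℝ) < 1/(q:ℝ) := by positivity
  linarith

variable {x : ℝ} (hx : x ∈ Set.Ioo 0 (1 - 1/(q:ℝ)))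
include hx

lemma SS_pos : 0 < SS q x := by
  have hθ := theta_pos hq
  apply Real.sqrt_pos.mpr
  have : x / (1 - 1/(q:ℝ)) < 1 := (div_lt_one hθ).mpr hx.2
  linarith

lemma SS_lt_one : SS q x < 1 := by
  have hθ := theta_pos hq
  have h1 : 1 - x / (1 - 1/(q:ℝ)) < 1 := by
    have : 0 < x / (1 - 1/(q:ℝ)) := div_pos hx.1 hθ
    linarith
  calc SS q x < Real.sqrt 1 := by
        apply Real.sqrt_lt_sqrt _ h1
        have : x / (1 - 1/(q:ℝ)) < 1 := (div_lt_one hθ).mpr hx.2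
        linarith
    _ = 1 := Real.sqrt_one

lemma SS_sq : (SS q x)^2 = 1 - x / (1 - 1/(q:ℝ)) := by
  have hθ := theta_pos hq
  rw [SS, sq_sqrt]
  have : x / (1 - 1/(q:ℝ)) < 1 := (div_lt_one hθ).mpr hx.2
  linarith

lemma YY_pos : 0 < YY q x := by
  have := SS_lt_one hq hx
  have hθ := theta_pos hq
  have : 0 < 1 - SS q x := by linarith
  exact mul_pos hθ this

lemma YY_lt : YY q x < 1 - 1/(q:ℝ) := by
  have h1 := SS_pos hq hx
  have hθ := theta_pos hq
  have : 1 - SS q x < 1 := by linarith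
  calc YY q x < (1 - 1/(q:ℝ)) * 1 := by exact mul_lt_mul_of_pos_left this hθ
    _ = _ := mul_one _

lemma YY_lt_one : YY q x < 1 := (YY_lt hq hx).trans (theta_lt_one hq)

lemma one_sub_YY_pos : 0 < 1 - YY q x := by linarith [YY_lt_one hq hx]

lemma hasDerivAt_SS : HasDerivAt (SS q) (-(1/(2 * (1 - 1/(q:ℝ)) * SS q x))) x := by
  have hθ := theta_pos hq
  have hu : (0:ℝ) < 1 - x / (1 - 1/(q:ℝ)) := by
    have : x / (1 - 1/(q:ℝ)) < 1 := (div_lt_one hθ).mpr hx.2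
    linarith
  have hin : HasDerivAt (fun y : ℝ => 1 - y / (1 - 1/(q:ℝ))) (-(1/(1 - 1/(q:ℝ)))) x := by
    simpa [div_eq_mul_inv, one_div] using
      (((hasDerivAt_id x).div_const (1 - 1/(q:ℝ))).const_sub 1)
  have := (Real.hasDerivAt_sqrt (ne_of_gt hu)).comp x hin
  refine this.congr_deriv ?_
  have hS : SS q x = Real.sqrt (1 - x / (1 - 1/(q:ℝ))) := rfl
  have hSpos := SS_pos hq hx
  rw [hS] at hSpos ⊢
  field_simp

lemma hasDerivAt_YY : HasDerivAt (YY q) (1/(2 * SS q x)) x := by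
  have hθ := theta_pos hq
  have hSpos := SS_pos hq hx
  have := ((hasDerivAt_SS hq hx).const_sub 1).const_mul (1 - 1/(q:ℝ))
  refine this.congr_deriv ?_
  have hq1 : (q:ℝ) - 1 ≠ 0 := by have := hr3 hq; linarith
  field_simp [hθ.ne', hSpos.ne', hq1]

omit hx in
lemma alphaE_eq : alphaE q = fun x => 1 - Real.qaryEntropy q (YY q x) / Real.log q := by
  funext z
  rw [alphaE, qEntropy_eq q hq]
  rfl

lemma hasDerivAt_alphaE : HasDerivAt (alphaE q) (D1 q x) x := by
  rw [alphaE_eq hq]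
  have hY0 := YY_pos hq hx
  have hY1 := YY_lt_one hq hx
  have h := HasDerivAt.comp (x := x)
    (Real.hasDerivAt_qaryEntropy (q := q) (p := YY q x) (ne_of_gt hY0) (ne_of_lt hY1))
    (hasDerivAt_YY hq hx)
  have h2 := (h.div_const (Real.log q)).const_sub 1
  refine h2.congr_deriv ?_
  rw [D1, LL]
  have hSpos := SS_pos hq hx
  have hc : (0:ℝ) < Real.log q := Real.log_pos (by have := hr3 hq; linarith)
  field_simp [hSpos.ne', hc.ne']

lemma hasDerivAt_D1 : HasDerivAt (D1 q) (D2 q x) x := by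
  have hθ := theta_pos hq
  have hSpos := SS_pos hq hx
  have hY0 := YY_pos hq hx
  have h1Y := one_sub_YY_pos hq hx
  have hc : (0:ℝ) < Real.log q := Real.log_pos (by have := hr3 hq; linarith)
  have hYd := hasDerivAt_YY hq hx
  have hA : HasDerivAt (fun y => Real.log (1 - YY q y))
      (-(1/(2 * SS q x)) / (1 - YY q x)) x := by
    have := (hYd.const_sub 1).log (ne_of_gt h1Y)
    convert this using 1
  have hB : HasDerivAt (fun y => Real.log (YY q y)) ((1/(2 * SS q x)) / (YY q x)) x :=
    hYd.log (ne_of_gt hY0)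
  have hLL : HasDerivAt (LL q)
      (-(1/(2 * SS q x)) / (1 - YY q x) - (1/(2 * SS q x)) / (YY q x)) x := by
    have := (hA.const_add (Real.log ((q:ℝ) - 1))).sub hB
    exact this
  have h2S : HasDerivAt (fun y => 2 * SS q y)
      (2 * (-(1/(2 * (1 - 1/(q:ℝ)) * SS q x)))) x := (hasDerivAt_SS hq hx).const_mul 2
  have h2Sne : 2 * SS q x ≠ 0 := by positivity
  have hdiv := hLL.div h2S h2Sne
  have := (hdiv.neg).div_const (Real.log q)
  refine this.congr_deriv ?_
  rw [D2, LL]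
  have hq0 : (q:ℝ) ≠ 0 := by have := hr3 hq; linarith
  have hq1 : (q:ℝ) - 1 ≠ 0 := by have := hr3 hq; linarith
  field_simp [hθ.ne', hSpos.ne', hY0.ne', h1Y.ne', hc.ne', hq0, hq1]
  ring


lemma D2_eq_EF : D2 q x = EF (q:ℝ) (SS q x) /
    (4 * (1 - 1/(q:ℝ)) * (SS q x)^3 * Real.log q) := by
  have hr := hr3 hq
  have hθ := theta_pos hq
  have hSpos := SS_pos hq hx
  have hS1 := SS_lt_one hq hx
  have hY0 := YY_pos hq hx
  have h1Y := one_sub_YY_pos hq hx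
  have hc : (0:ℝ) < Real.log q := Real.log_pos (by linarith)
  have hq0 : (q:ℝ) ≠ 0 := by linarith
  have hq1 : (0:ℝ) < (q:ℝ) - 1 := by linarith
  have h1S : (0:ℝ) < 1 - SS q x := by linarith
  have hN : (0:ℝ) < 1 + ((q:ℝ)-1) * SS q x := by nlinarith
  have hYeq : YY q x = ((q:ℝ)-1)*(1-SS q x)/(q:ℝ) := by
    rw [YY]; field_simp
  have h1Yeq : 1 - YY q x = (1+((q:ℝ)-1)*SS q x)/(q:ℝ) := by
    rw [YY]; field_simp; ring
  have hlogY : Real.log (YY q x) =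
      Real.log ((q:ℝ)-1) + Real.log (1-SS q x) - Real.log q := by
    rw [hYeq, Real.log_div (by positivity) hq0, Real.log_mul hq1.ne' h1S.ne']
  have hlog1Y : Real.log (1 - YY q x) = Real.log (1+((q:ℝ)-1)*SS q x) - Real.log q := by
    rw [h1Yeq, Real.log_div hN.ne' hq0]
  have hLL : LL q x = Real.log (1+((q:ℝ)-1)*SS q x) - Real.log (1-SS q x) := by
    rw [LL, hlogY, hlog1Y]; ring
  have hEF : EF (q:ℝ) (SS q x) = (q:ℝ)*SS q x/((1-SS q x)*(1+((q:ℝ)-1)*SS q x)) -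
      (Real.log (1+((q:ℝ)-1)*SS q x) - Real.log (1-SS q x)) := by
    rw [EF, Real.log_div hN.ne' h1S.ne']
  rw [D2, hLL, hEF, h1Yeq, hYeq]
  field_simp

lemma deriv2_alphaE : deriv (deriv (alphaE q)) x = D2 q x := by
  have hev : deriv (alphaE q) =ᶠ[nhds x] D1 q := by
    filter_upwards [isOpen_Ioo.mem_nhds hx] with y hy
    exact (hasDerivAt_alphaE hq hy).deriv
  rw [Filter.EventuallyEq.deriv_eq hev, (hasDerivAt_D1 hq hx).deriv]

lemma hasDerivAt_deriv_alphaE : HasDerivAt (deriv (alphaE q)) (D2 q x) x := by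
  have hev : deriv (alphaE q) =ᶠ[nhds x] D1 q := by
    filter_upwards [isOpen_Ioo.mem_nhds hx] with y hy
    exact (hasDerivAt_alphaE hq hy).deriv
  exact (hasDerivAt_D1 hq hx).congr_of_eventuallyEq hev

omit hx in
lemma alphaE_continuous : Continuous (alphaE q) := by
  rw [alphaE_eq hq]
  have h1 : Continuous (YY q) := by
    unfold YY SS
    fun_prop
  fun_prop

end Calc

theorem stmt15 (q : ℕ) (hq : 3 ≤ q) :
    ∃ δE ∈ Set.Ioo ((2 * (q : ℝ) - 3) / ((q : ℝ) * ((q : ℝ) - 1)))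
        ((3 / 4) * ((q : ℝ) - 4 / 3) / ((q : ℝ) - 1)),
      ConvexOn ℝ (Set.Icc (0 : ℝ) δE) (alphaE q) ∧
      ConcaveOn ℝ (Set.Icc δE (1 - 1 / (q : ℝ))) (alphaE q) ∧
      (∀ x ∈ Set.Ioo (0 : ℝ) δE, 0 < deriv (deriv (alphaE q)) x) ∧
      (∀ x ∈ Set.Ioo δE (1 - 1 / (q : ℝ)), deriv (deriv (alphaE q)) x < 0) := by
  have hr : (3:ℝ) ≤ (q:ℝ) := by exact_mod_cast hq
  have hθ : (0:ℝ) < 1 - 1/(q:ℝ) := theta_pos hq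
  have hθ1 : (1:ℝ) - 1/(q:ℝ) < 1 := theta_lt_one hq
  have hq0 : (0:ℝ) < (q:ℝ) := by linarith
  have hq1 : (0:ℝ) < (q:ℝ) - 1 := by linarith
  have hc : (0:ℝ) < Real.log q := Real.log_pos (by linarith)
  have hθeq : 1 - 1/(q:ℝ) = ((q:ℝ)-1)/(q:ℝ) := by field_simp
  obtain ⟨sc, hscmem, hval, hneg, hpos⟩ := EF_root hr
  have hsc1 : sc < 1 := hscmem.2.trans (s1_lt_one hr)
  have hsc0 : 0 < sc := (s0_pos hr).trans hscmem.1
  have hsc_up : sc * ((q:ℝ)-1) < (q:ℝ)-2 := by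
    have := hscmem.2
    rwa [lt_div_iff₀ hq1] at this
  have hsc_lo : (q:ℝ)-2 < sc * (2*((q:ℝ)-1)) := by
    have := hscmem.1
    rwa [div_lt_iff₀ (by linarith)] at this
  set δE : ℝ := (1 - 1/(q:ℝ)) * (1 - sc^2) with hδdef
  have hδpos : 0 < δE := by
    apply mul_pos hθ
    nlinarith
  have hδθ : δE < 1 - 1/(q:ℝ) := by
    rw [hδdef]
    nlinarith [mul_pos hθ (mul_pos hsc0 hsc0)]
  -- membership of δE in each Ioo-of-(0,θ) translation to SS bounds
  have hSSmem : ∀ x ∈ Set.Ioo (0:ℝ) (1 - 1/(q:ℝ)),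
      (x < δE → sc < SS q x) ∧ (δE < x → SS q x < sc) := by
    intro x hx
    have hSsq := SS_sq hq hx
    have hSpos := SS_pos hq hx
    constructor
    · intro hlt
      have h2 : sc^2 < (SS q x)^2 := by
        rw [hSsq]
        rw [hδdef] at hlt
        have : x / (1 - 1/(q:ℝ)) < 1 - sc^2 := by
          rw [div_lt_iff₀ hθ]
          nlinarith
        linarith
      exact lt_of_pow_lt_pow_left₀ 2 hSpos.le h2
    · intro hlt
      have h2 : (SS q x)^2 < sc^2 := by
        rw [hSsq]
        rw [hδdef] at hlt
        have : 1 - sc^2 < x / (1 - 1/(q:ℝ)) := by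
          rw [lt_div_iff₀ hθ]
          nlinarith
        linarith
      exact lt_of_pow_lt_pow_left₀ 2 hsc0.le h2
  have hD2pos : ∀ x ∈ Set.Ioo (0:ℝ) δE, 0 < D2 q x := by
    intro x hx
    have hxθ : x ∈ Set.Ioo (0:ℝ) (1 - 1/(q:ℝ)) := ⟨hx.1, hx.2.trans hδθ⟩
    rw [D2_eq_EF hq hxθ]
    apply div_pos
    · exact hpos _ ⟨(hSSmem x hxθ).1 hx.2, SS_lt_one hq hxθ⟩
    · have := SS_pos hq hxθ
      positivity
  have hD2neg : ∀ x ∈ Set.Ioo δE (1 - 1/(q:ℝ)), D2 q x < 0 := by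
    intro x hx
    have hxθ : x ∈ Set.Ioo (0:ℝ) (1 - 1/(q:ℝ)) := ⟨hδpos.trans hx.1, hx.2⟩
    rw [D2_eq_EF hq hxθ]
    apply div_neg_of_neg_of_pos
    · exact hneg _ ⟨SS_pos hq hxθ, (hSSmem x hxθ).2 hx.1⟩
    · have := SS_pos hq hxθ
      positivity
  refine ⟨δE, ⟨?_, ?_⟩, ?_, ?_, ?_, ?_⟩
  · -- lower bound
    rw [hδdef, hθeq, div_lt_iff₀ (by positivity : (0:ℝ) < (q:ℝ)*((q:ℝ)-1))]
    have key : ((q:ℝ)-1)/(q:ℝ)*(1-sc^2)*((q:ℝ)*((q:ℝ)-1)) = ((q:ℝ)-1)^2*(1-sc^2) := by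
      field_simp
    rw [key]
    nlinarith [mul_pos hsc0 hq1]
  · -- upper bound
    have hrhs : (3/4) * ((q:ℝ) - 4/3) / ((q:ℝ)-1) = (3*(q:ℝ)-4)/(4*((q:ℝ)-1)) := by
      field_simp
    have key2 : ((q:ℝ)-1)/(q:ℝ)*(1-sc^2) = (((q:ℝ)-1)*(1-sc^2))/(q:ℝ) := by ring
    rw [hδdef, hθeq, hrhs, key2, div_lt_div_iff₀ (by positivity) (by linarith)]
    nlinarith [mul_pos hsc0 hq1]
  · -- convex
    apply convexOn_of_deriv2_nonneg (convex_Icc _ _)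
      ((alphaE_continuous hq).continuousOn)
    · intro x hx
      rw [interior_Icc] at hx
      exact (hasDerivAt_alphaE hq ⟨hx.1, hx.2.trans hδθ⟩).differentiableAt.differentiableWithinAt
    · intro x hx
      rw [interior_Icc] at hx
      exact (hasDerivAt_deriv_alphaE hq
        ⟨hx.1, hx.2.trans hδθ⟩).differentiableAt.differentiableWithinAt
    · intro x hx
      rw [interior_Icc] at hx
      show 0 ≤ deriv (deriv (alphaE q)) x
      rw [deriv2_alphaE hq ⟨hx.1, hx.2.trans hδθ⟩]
      exact (hD2pos x hx).le
  · -- concave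
    apply concaveOn_of_deriv2_nonpos (convex_Icc _ _)
      ((alphaE_continuous hq).continuousOn)
    · intro x hx
      rw [interior_Icc] at hx
      exact (hasDerivAt_alphaE hq
        ⟨hδpos.trans hx.1, hx.2⟩).differentiableAt.differentiableWithinAt
    · intro x hx
      rw [interior_Icc] at hx
      exact (hasDerivAt_deriv_alphaE hq
        ⟨hδpos.trans hx.1, hx.2⟩).differentiableAt.differentiableWithinAt
    · intro x hx
      rw [interior_Icc] at hx
      show deriv (deriv (alphaE q)) x ≤ 0
      rw [deriv2_alphaE hq ⟨hδpos.trans hx.1, hx.2⟩]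
      exact (hD2neg x hx).le
  · intro x hx
    rw [deriv2_alphaE hq ⟨hx.1, hx.2.trans hδθ⟩]
    exact hD2pos x hx
  · intro x hx
    rw [deriv2_alphaE hq ⟨hδpos.trans hx.1, hx.2⟩]
    exact hD2neg x hx
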